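/- Let k ≥ 1, n ≥ k+1, and let Z be any real n×(k+1) matrix of rank k+1. Then the open rational Grasstope of Z, i.e., the set of points [π(AZ)] ∈ ℝP^k as A ranges over all totally positive k×n matrices with AZ of rank k, is an open subset of ℝP^k. -/

import Mathlib

open Matrix

/-- The minor of a real `k × n` matrix on a set `S` of `k` columns. -/
noncomputable def minorCols {k n : ℕ} (A : Matrix (Fin k) (Fin n) ℝ)
    (S : Finset (Fin n)) (hS : S.card = k) : ℝ :=
  (A.submatrix id (fun i => ((S.orderIsoOfFin hS) i : Fin n))).det

/-- The minor of a real `n × k` matrix on a set `S` of `k` rows. -/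
noncomputable def minorRows {k n : ℕ} (B : Matrix (Fin n) (Fin k) ℝ)
    (S : Finset (Fin n)) (hS : S.card = k) : ℝ :=
  (B.submatrix (fun i => ((S.orderIsoOfFin hS) i : Fin n)) id).det

/-- A real `k × n` matrix is totally nonnegative if all its maximal (`k × k`) minors
are nonnegative. -/
def IsTotallyNonneg {k n : ℕ} (A : Matrix (Fin k) (Fin n) ℝ) : Prop :=
  ∀ (S : Finset (Fin n)) (hS : S.card = k), 0 ≤ minorCols A S hS

/-- A real `k × n` matrix is totally positive if all its maximal (`k × k`) minors
are strictly positive. -/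
def IsTotallyPos {k n : ℕ} (A : Matrix (Fin k) (Fin n) ℝ) : Prop :=
  ∀ (S : Finset (Fin n)) (hS : S.card = k), 0 < minorCols A S hS

/-- `π(B)`: the signed vector of maximal minors of a `k × (k+1)` matrix,
`π(B)_j = (-1)^j · det(B with column j deleted)` (`j` zero-indexed). -/
noncomputable def piVec {k : ℕ} (B : Matrix (Fin k) (Fin (k + 1)) ℝ) : Fin (k + 1) → ℝ :=
  fun j => (-1 : ℝ) ^ (j : ℕ) * (B.submatrix id j.succAbove).det

/-- The open rational Grasstope of `Z`: the set of points `[π(A*Z)] ∈ ℝP^k` as `A` ranges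
over totally positive `k × n` matrices with `A * Z` of rank `k`. -/
noncomputable def openGrasstope1 {n k : ℕ} (Z : Matrix (Fin n) (Fin (k + 1)) ℝ) :
    Set (Projectivization ℝ (Fin (k + 1) → ℝ)) :=
  {P | ∃ (A : Matrix (Fin k) (Fin n) ℝ) (h : piVec (A * Z) ≠ 0),
    IsTotallyPos A ∧ (A * Z).rank = k ∧
    P = Projectivization.mk ℝ (piVec (A * Z)) h}

/-- The quotient topology on a projectivization. -/
noncomputable instance {K V : Type*} [DivisionRing K] [AddCommGroup V] [Module K V]
    [TopologicalSpace V] : TopologicalSpace (Projectivization K V) :=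
  inferInstanceAs (TopologicalSpace (Quotient _))

/-- Laplace-type identity: `B ⬝ π(B) = 0`. -/
lemma sum_mul_piVec {k : ℕ} (B : Matrix (Fin k) (Fin (k + 1)) ℝ) (i : Fin k) :
    ∑ j, B i j * piVec B j = 0 := by
  classical
  set N : Matrix (Fin (k + 1)) (Fin (k + 1)) ℝ := Matrix.of (Fin.cons (α := fun _ => Fin (k+1) → ℝ) (B i) (fun l => B l)) with hN
  have hrows : N 0 = N i.succ := by
    show Fin.cons (α := fun _ => Fin (k+1) → ℝ) (B i) (fun l => B l) 0 = Fin.cons (α := fun _ => Fin (k+1) → ℝ) (B i) (fun l => B l) i.succ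
    rw [Fin.cons_zero, Fin.cons_succ]
  have hdet : N.det = 0 :=
    Matrix.det_zero_of_row_eq (Fin.succ_ne_zero i).symm hrows
  have hsub : ∀ j : Fin (k + 1),
      N.submatrix Fin.succ j.succAbove = B.submatrix id j.succAbove := by
    intro j; ext l m
    show Fin.cons (α := fun _ => Fin (k+1) → ℝ) (B i) (fun l => B l) l.succ (j.succAbove m) = B l (j.succAbove m)
    rw [Fin.cons_succ]
  rw [Matrix.det_succ_row_zero] at hdet
  calc ∑ j, B i j * piVec B j
      = ∑ j : Fin (k + 1), (-1) ^ (j : ℕ) * N 0 j * (N.submatrix Fin.succ j.succAbove).det := by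
        refine Finset.sum_congr rfl fun j _ => ?_
        rw [hsub j]
        have h0 : N 0 j = B i j := by
          show Fin.cons (α := fun _ => Fin (k+1) → ℝ) (B i) (fun l => B l) 0 j = B i j
          rw [Fin.cons_zero]
        rw [h0]
        simp only [piVec]
        ring
    _ = 0 := hdet

/-- Splitting the Laplace identity at column `j`. -/
lemma piVec_rel {k : ℕ} (B : Matrix (Fin k) (Fin (k + 1)) ℝ) (j : Fin (k + 1)) (i : Fin k) :
    B i j * piVec B j + ∑ l, B i (j.succAbove l) * piVec B (j.succAbove l) = 0 := by
  rw [← Fin.sum_univ_succAbove (fun j' => B i j' * piVec B j') j]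
  exact sum_mul_piVec B i

lemma rank_of_piVec_ne {k : ℕ} (B : Matrix (Fin k) (Fin (k + 1)) ℝ)
    (h : piVec B ≠ 0) : B.rank = k := by
  classical
  obtain ⟨j, hj⟩ := Function.ne_iff.mp h
  have hdet : (B.submatrix id j.succAbove).det ≠ 0 := by
    intro h0
    apply hj
    simp [piVec, h0]
  refine le_antisymm (B.rank_le_card_height.trans (by simp)) ?_
  set P : Matrix (Fin (k + 1)) (Fin k) ℝ :=
    Matrix.of fun m l => (1 : Matrix (Fin (k + 1)) (Fin (k + 1)) ℝ) m (j.succAbove l) with hP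
  have hBP : B * P = B.submatrix id j.succAbove := by
    ext i l
    simp [hP, Matrix.mul_apply, Matrix.one_apply]
  have hunit : IsUnit (B.submatrix id j.succAbove) := by
    rw [Matrix.isUnit_iff_isUnit_det]
    exact isUnit_iff_ne_zero.mpr hdet
  have : (B.submatrix id j.succAbove).rank = k := by
    rw [Matrix.rank_of_isUnit _ hunit, Fintype.card_fin]
  calc k = (B * P).rank := by rw [hBP, this]
    _ ≤ B.rank := Matrix.rank_mul_le_left B P

/-- A continuous local section of the Plücker map `π` through a given matrix. -/
lemma exists_section {k : ℕ} (hk : 1 ≤ k) (B0 : Matrix (Fin k) (Fin (k + 1)) ℝ)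
    (j : Fin (k + 1)) (hj : piVec B0 j ≠ 0) :
    ∃ σ : (Fin (k + 1) → ℝ) → Matrix (Fin k) (Fin (k + 1)) ℝ,
      ContinuousOn σ {u | u j ≠ 0} ∧ σ (piVec B0) = B0 ∧
      ∀ u, u j ≠ 0 → piVec (σ u) = u := by
  classical
  set v : Fin (k + 1) → ℝ := piVec B0 with hv
  set M : Matrix (Fin k) (Fin k) ℝ := B0.submatrix id j.succAbove with hM
  have hMdet : M.det ≠ 0 := by
    intro h0
    apply hj
    simp [hv, piVec, ← hM, h0]
  have hvj : v j = (-1 : ℝ) ^ (j : ℕ) * M.det := rfl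
  set i0 : Fin k := ⟨0, hk⟩ with hi0
  -- the scaled square part
  set R : (Fin (k + 1) → ℝ) → Matrix (Fin k) (Fin k) ℝ :=
    fun u => Matrix.of fun i l => (if i = i0 then u j / v j else 1) * M i l with hR
  -- the new `j`-th column
  set c : (Fin (k + 1) → ℝ) → Fin k → ℝ :=
    fun u i => -(u j)⁻¹ * ((R u).mulVec fun l => u (j.succAbove l)) i with hc
  set σ : (Fin (k + 1) → ℝ) → Matrix (Fin k) (Fin (k + 1)) ℝ :=
    fun u => Matrix.of fun i => j.insertNth (c u i) (fun l => R u i l) with hσ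
  have hσ_col : ∀ u i, σ u i j = c u i := by
    intro u i
    simp only [hσ, Matrix.of_apply, Fin.insertNth_apply_same]
  have hσ_sub : ∀ u i l, σ u i (j.succAbove l) = R u i l := by
    intro u i l
    simp only [hσ, Matrix.of_apply, Fin.insertNth_apply_succAbove]
  have hRdet : ∀ u, (R u).det = (u j / v j) * M.det := by
    intro u
    have : R u = M.updateRow i0 ((u j / v j) • M i0) := by
      ext i l
      by_cases hi : i = i0
      · subst hi; simp [hR, Matrix.updateRow_self]
      · simp [hR, hi, Matrix.updateRow_ne hi]
    rw [this, Matrix.det_updateRow_smul, Matrix.updateRow_eq_self]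
  -- π of σ u at j
  have hπj : ∀ u, u j ≠ 0 → piVec (σ u) j = u j := by
    intro u hu
    have hsub : (σ u).submatrix id j.succAbove = R u := by
      ext i l; exact hσ_sub u i l
    show (-1 : ℝ) ^ (j : ℕ) * ((σ u).submatrix id j.succAbove).det = u j
    rw [hsub, hRdet]
    field_simp [hvj]
    ring_nf; rw [hvj]; ring
  -- π of σ u elsewhere
  have hπ : ∀ u, u j ≠ 0 → piVec (σ u) = u := by
    intro u hu
    have hRudet : (R u).det ≠ 0 := by
      rw [hRdet]
      exact mul_ne_zero (div_ne_zero hu hj) hMdet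
    have hRunit : IsUnit (R u) := (Matrix.isUnit_iff_isUnit_det _).2 (isUnit_iff_ne_zero.2 hRudet)
    have hinj : Function.Injective (R u).mulVec := Matrix.mulVec_injective_iff_isUnit.2 hRunit
    have key : (R u).mulVec (fun l => piVec (σ u) (j.succAbove l))
        = (R u).mulVec (fun l => u (j.succAbove l)) := by
      funext i
      have h1 := piVec_rel (σ u) j i
      rw [hσ_col, hπj u hu] at h1
      have h2 : ∀ l, σ u i (j.succAbove l) = R u i l := hσ_sub u i
      have h3 : ((R u).mulVec fun l => piVec (σ u) (j.succAbove l)) i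
          = ∑ l, R u i l * piVec (σ u) (j.succAbove l) := rfl
      rw [h3]
      have h4 : ∑ l, σ u i (j.succAbove l) * piVec (σ u) (j.succAbove l)
          = ∑ l, R u i l * piVec (σ u) (j.succAbove l) :=
        Finset.sum_congr rfl fun l _ => by rw [h2]
      rw [h4] at h1
      have h5 : ∑ l, R u i l * piVec (σ u) (j.succAbove l) = -(c u i * u j) := by
        linarith [h1]
      rw [h5, hc]
      show -((-(u j)⁻¹ * ((R u).mulVec fun l => u (j.succAbove l)) i) * u j)
          = ((R u).mulVec fun l => u (j.succAbove l)) i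
      field_simp
    have hss := hinj key
    funext j'
    by_cases hj' : j' = j
    · subst hj'; exact hπj u hu
    · obtain ⟨l, rfl⟩ := Fin.exists_succAbove_eq hj'
      exact congrFun hss l
  refine ⟨σ, ?_, ?_, hπ⟩
  · -- continuity
    have hRcont : ∀ i l, Continuous fun u : Fin (k + 1) → ℝ => R u i l := by
      intro i l
      by_cases hi : i = i0
      · have he : (fun u : Fin (k + 1) → ℝ => R u i l) = fun u => (u j / v j) * M i l := by
          funext u; simp [hR, hi]
        rw [he]; fun_prop
      · have he : (fun u : Fin (k + 1) → ℝ => R u i l) = fun _ => M i l := by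
          funext u; simp [hR, hi]
        rw [he]; exact continuous_const
    have hsumcont : ∀ i, Continuous fun u : Fin (k + 1) → ℝ =>
        ∑ l, R u i l * u (j.succAbove l) := by
      intro i
      apply continuous_finset_sum
      intro l _
      exact (hRcont i l).mul (continuous_apply _)
    have hccont : ∀ i, ContinuousOn (fun u => c u i) {u | u j ≠ 0} := by
      intro i
      have h1 : ContinuousOn (fun u : Fin (k + 1) → ℝ => -(u j)⁻¹) {u | u j ≠ 0} :=
        ((continuous_apply j).continuousOn.inv₀ fun x hx => hx).neg
      have h2 : (fun u => c u i)
          = fun u : Fin (k + 1) → ℝ => -(u j)⁻¹ * ∑ l, R u i l * u (j.succAbove l) := rfl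
      rw [h2]
      exact h1.mul (hsumcont i).continuousOn
    apply continuousOn_pi.2
    intro i
    apply continuousOn_pi.2
    intro j'
    by_cases hj' : j' = j
    · rw [hj']
      have he : (fun u => σ u i j) = fun u => c u i := funext fun u => hσ_col u i
      rw [he]
      exact hccont i
    · obtain ⟨l, rfl⟩ := Fin.exists_succAbove_eq hj'
      have he : (fun u => σ u i (j.succAbove l)) = fun u => R u i l :=
        funext fun u => hσ_sub u i l
      rw [he]
      exact (hRcont i l).continuousOn
  · -- σ v = B0
    have hcv : ∀ i, c v i = B0 i j := by
      intro i
      have h1 := piVec_rel B0 j i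
      have h2 : ∑ l, B0 i (j.succAbove l) * v (j.succAbove l)
          = (M.mulVec fun l => v (j.succAbove l)) i := rfl
      have hRv : R v = M := by
        ext i' l
        simp [hR, div_self hj]
      have h4 : c v i = -(v j)⁻¹ * (M.mulVec fun l => v (j.succAbove l)) i := by
        rw [show c v i = -(v j)⁻¹ * ((R v).mulVec fun l => v (j.succAbove l)) i from rfl, hRv]
      have h3 : (M.mulVec fun l => v (j.succAbove l)) i = -(B0 i j * v j) := by
        rw [← h2]; linarith [h1]
      rw [h4, h3]
      field_simp
    have hRv : R v = M := by
      ext i' l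
      simp [hR, div_self hj]
    ext i j'
    by_cases hj' : j' = j
    · subst hj'; rw [hσ_col, hcv]
    · obtain ⟨l, rfl⟩ := Fin.exists_succAbove_eq hj'
      rw [hσ_sub, hRv]
      rfl

lemma isOpen_TP {k n : ℕ} : IsOpen {A : Matrix (Fin k) (Fin n) ℝ | IsTotallyPos A} := by
  have he : {A : Matrix (Fin k) (Fin n) ℝ | IsTotallyPos A}
      = ⋂ (S : Finset (Fin n)) (hS : S.card = k), {A | 0 < minorCols A S hS} := by
    ext A
    simp only [Set.mem_setOf_eq, Set.mem_iInter]
    exact ⟨fun h S hS => h S hS, fun h S hS => h S hS⟩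
  rw [he]
  refine isOpen_iInter_of_finite fun S => isOpen_iInter_of_finite fun hS => ?_
  have hc : Continuous fun A : Matrix (Fin k) (Fin n) ℝ => minorCols A S hS :=
    (continuous_id.matrix_submatrix _ _).matrix_det
  exact isOpen_lt continuous_const hc

lemma exists_left_inverse {k n : ℕ} (Z : Matrix (Fin n) (Fin (k + 1)) ℝ)
    (hZ : Z.rank = k + 1) :
    ∃ Y : Matrix (Fin (k + 1)) (Fin n) ℝ, Y * Z = 1 := by
  classical
  have hsurj : Function.Surjective Zᵀ.mulVecLin := by
    rw [← LinearMap.range_eq_top]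
    apply Submodule.eq_top_of_finrank_eq
    have h1 : Module.finrank ℝ (LinearMap.range Zᵀ.mulVecLin) = Zᵀ.rank := rfl
    rw [h1, Matrix.rank_transpose, hZ, Module.finrank_fin_fun]
  choose g hg using hsurj
  refine ⟨Matrix.of fun i => g (Pi.single i 1), ?_⟩
  ext i j'
  have h2 := congrFun (hg (Pi.single i 1)) j'
  simp only [Matrix.mulVecLin_apply, Matrix.mulVec, dotProduct,
    Matrix.transpose_apply] at h2
  rw [Matrix.mul_apply, Matrix.one_apply]
  simp only [Matrix.of_apply]
  rw [show ∑ l, g (Pi.single i 1) l * Z l j' = ∑ l, Z l j' * g (Pi.single i 1) l from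
    Finset.sum_congr rfl fun l _ => mul_comm _ _, h2, Pi.single_apply]
  by_cases h : i = j' <;> simp [h, eq_comm]

lemma isOpen_image_mulZ {k n : ℕ} (Z : Matrix (Fin n) (Fin (k + 1)) ℝ)
    (Y : Matrix (Fin (k + 1)) (Fin n) ℝ) (hYZ : Y * Z = 1) :
    IsOpen {B : Matrix (Fin k) (Fin (k + 1)) ℝ | ∃ A, IsTotallyPos A ∧ A * Z = B} := by
  rw [isOpen_iff_mem_nhds]
  rintro B ⟨A₀, hA₀, rfl⟩
  set h : Matrix (Fin k) (Fin (k + 1)) ℝ → Matrix (Fin k) (Fin n) ℝ :=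
    fun B' => A₀ + (B' - A₀ * Z) * Y with hh
  have hcont : Continuous h := by
    apply continuous_const.add
    exact (continuous_id.sub continuous_const).matrix_mul continuous_const
  have hsec : ∀ B', h B' * Z = B' := by
    intro B'
    rw [hh]
    simp only
    rw [Matrix.add_mul, Matrix.mul_assoc, hYZ, Matrix.mul_one]
    abel
  have hmem : A₀ * Z ∈ h ⁻¹' {A | IsTotallyPos A} := by
    show IsTotallyPos (h (A₀ * Z))
    have : h (A₀ * Z) = A₀ := by
      rw [hh]; simp
    rw [this]; exact hA₀
  refine Filter.mem_of_superset
    ((hcont.isOpen_preimage _ isOpen_TP).mem_nhds hmem) ?_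
  intro B' hB'
  exact ⟨h B', hB', hsec B'⟩


/-- The open rational Grasstope of `Z` is an open subset of `ℝP^k`. -/
theorem stmt10 (k n : ℕ) (hk : 1 ≤ k) (hn : k + 1 ≤ n)
    (Z : Matrix (Fin n) (Fin (k + 1)) ℝ) (hZ : Z.rank = k + 1) :
    IsOpen (openGrasstope1 Z) := by
  classical
  obtain ⟨Y, hYZ⟩ := exists_left_inverse Z hZ
  set O : Set (Matrix (Fin k) (Fin (k + 1)) ℝ) :=
    {B | ∃ A, IsTotallyPos A ∧ A * Z = B} with hOdef
  have hOopen : IsOpen O := isOpen_image_mulZ Z Y hYZ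
  set W : Set (Fin (k + 1) → ℝ) :=
    {w | ∃ (c : ℝ) (B : Matrix (Fin k) (Fin (k + 1)) ℝ),
      c ≠ 0 ∧ B ∈ O ∧ piVec B ≠ 0 ∧ w = c • piVec B} with hWdef
  have hW : IsOpen W := by
    rw [isOpen_iff_mem_nhds]
    rintro w ⟨c, B0, hc, hBO, hpi, rfl⟩
    obtain ⟨j, hj0⟩ := Function.ne_iff.mp hpi
    have hj : piVec B0 j ≠ 0 := by simpa using hj0
    obtain ⟨σ, hσcont, hσv, hσpi⟩ := exists_section hk B0 j hj
    have hTopen : IsOpen ({u : Fin (k + 1) → ℝ | u j ≠ 0} ∩ σ ⁻¹' O) := by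
      refine hσcont.isOpen_inter_preimage ?_ hOopen
      exact isOpen_compl_singleton.preimage (continuous_apply j)
    have hmemT : piVec B0 ∈ {u : Fin (k + 1) → ℝ | u j ≠ 0} ∩ σ ⁻¹' O := by
      refine ⟨hj, ?_⟩
      show σ (piVec B0) ∈ O
      rw [hσv]
      exact hBO
    have hφ : Continuous fun x : Fin (k + 1) → ℝ => c⁻¹ • x := continuous_const_smul _
    refine Filter.mem_of_superset ((hTopen.preimage hφ).mem_nhds ?_) ?_
    · refine Set.mem_preimage.mpr ?_
      rw [inv_smul_smul₀ hc]
      exact hmemT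
    · rintro x ⟨hx1, hx2⟩
      have hx1' : (c⁻¹ • x) j ≠ 0 := hx1
      refine ⟨c, σ (c⁻¹ • x), hc, hx2, ?_, ?_⟩
      · rw [hσpi _ hx1']
        intro h0
        exact hx1' (by rw [h0]; rfl)
      · rw [hσpi _ hx1', smul_inv_smul₀ hc]
  have hq : Topology.IsQuotientMap
      (Projectivization.mk' ℝ : {v : Fin (k + 1) → ℝ // v ≠ 0} →
        Projectivization ℝ (Fin (k + 1) → ℝ)) :=
    isQuotientMap_quot_mk (r := (projectivizationSetoid ℝ (Fin (k + 1) → ℝ)).r)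
  have hpre : (Projectivization.mk' ℝ : {v : Fin (k + 1) → ℝ // v ≠ 0} →
      Projectivization ℝ (Fin (k + 1) → ℝ)) ⁻¹' openGrasstope1 Z = Subtype.val ⁻¹' W := by
    ext x
    obtain ⟨x, hx⟩ := x
    simp only [Set.mem_preimage]
    have hmk : Projectivization.mk' ℝ (⟨x, hx⟩ : {v : Fin (k + 1) → ℝ // v ≠ 0})
        = Projectivization.mk ℝ x hx := rfl
    constructor
    · rintro ⟨A, h, hTP, hrank, heq⟩
      rw [hmk] at heq
      obtain ⟨a, ha⟩ := (Projectivization.mk_eq_mk_iff' ℝ _ _ hx h).mp heq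
      have ha0 : a ≠ 0 := by
        intro h0
        rw [h0, zero_smul] at ha
        exact hx ha.symm
      exact ⟨a, A * Z, ha0, ⟨A, hTP, rfl⟩, h, ha.symm⟩
    · rintro ⟨a, B, ha0, ⟨A, hTP, rfl⟩, hpi, hxe⟩
      refine ⟨A, hpi, hTP, rank_of_piVec_ne _ hpi, ?_⟩
      rw [hmk]
      exact (Projectivization.mk_eq_mk_iff' ℝ _ _ hx hpi).mpr ⟨a, hxe.symm⟩
  have : IsOpen ((Projectivization.mk' ℝ : {v : Fin (k + 1) → ℝ // v ≠ 0} →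
      Projectivization ℝ (Fin (k + 1) → ℝ)) ⁻¹' openGrasstope1 Z) := by
    rw [hpre]
    exact hW.preimage continuous_subtype_val
  exact hq.isOpen_preimage.mp this
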